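/- Let r > 0. For every g ∈ X_r there exists a unique h ∈ X_r⁰ such that L h = g. Moreover the inverse operator satisfies the bound ‖L⁻¹ g‖_r = ‖h‖_r ≤ r² e^{r²/2} ‖G g‖_r, where G is the operator defined on power series by (G g)(x) = Σ_{n≥0} g_n / ((n+2)⟨n⟩) · xⁿ. -/

import Mathlib

open Set

/-- The `X_r` norm of a coefficient sequence: `‖f‖_r = Σ_n |f_n| ⟨n⟩ r^{n-1}`,
where `⟨n⟩ = max{1, n}`. -/
noncomputable def Xnorm (r : ℝ) (f : ℕ → ℝ) : ℝ :=
  ∑' n : ℕ, |f n| * max 1 (n : ℝ) * r ^ ((n : ℤ) - 1)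

/-- Membership in `X_r`: the coefficient sequence is even (vanishes on odd indices)
and has finite `X_r` norm. -/
def MemX (r : ℝ) (f : ℕ → ℝ) : Prop :=
  (∀ n, Odd n → f n = 0) ∧
  Summable (fun n : ℕ => |f n| * max 1 (n : ℝ) * r ^ ((n : ℤ) - 1))

/-- Action of the operator `L h = h'' + h'(1/x - x) + h` on coefficient sequences:
the `n`-th coefficient of `L f` is `(n+2)² f_{n+2} - (n-1) f_n`. -/
def Lcoef (f : ℕ → ℝ) (n : ℕ) : ℝ :=
  ((n : ℝ) + 2) ^ 2 * f (n + 2) - ((n : ℝ) - 1) * f n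

/-- The smoothing operator `G`: the `n`-th coefficient of `G g` is `g_n / ((n+2)⟨n⟩)`. -/
noncomputable def Gcoef (g : ℕ → ℝ) (n : ℕ) : ℝ :=
  g n / (((n : ℝ) + 2) * max 1 (n : ℝ))

/-- Solution sequence of the recursion `(n+2)² h_{n+2} = (n-1) h_n + g_n`, `h₀ = h₁ = 0`. -/
noncomputable def hseq (g : ℕ → ℝ) : ℕ → ℝ
  | 0 => 0
  | 1 => 0
  | (n+2) => (((n:ℝ) - 1) * hseq g n + g n) / ((n:ℝ)+2)^2

/-- Majorant sequence. -/
noncomputable def Hb (u : ℕ → ℝ) : ℕ → ℝ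
  | 0 => 0
  | 1 => 0
  | (n+2) => ((n:ℝ) * Hb u n + u n) / ((n:ℝ)+2)^2

lemma hseq_L (g : ℕ → ℝ) (n : ℕ) : Lcoef (hseq g) n = g n := by
  have h2 : ((n:ℝ)+2)^2 ≠ 0 := by positivity
  simp only [Lcoef, hseq]
  field_simp
  ring

lemma hseq_odd (g : ℕ → ℝ) (hg : ∀ n, Odd n → g n = 0) : ∀ n, Odd n → hseq g n = 0 := by
  intro n
  induction n using Nat.twoStepInduction with
  | zero => intro h; simp at h
  | one => intro _; rfl
  | more n ih _ =>
    intro hodd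
    have hn : Odd n := by rcases hodd with ⟨k, hk⟩; exact ⟨k - 1, by omega⟩
    simp [hseq, ih hn, hg n hn]

lemma Hb_nonneg (u : ℕ → ℝ) (hu : ∀ n, 0 ≤ u n) : ∀ n, 0 ≤ Hb u n := by
  intro n
  induction n using Nat.twoStepInduction with
  | zero => simp [Hb]
  | one => simp [Hb]
  | more n ih _ =>
    have h1 : (0:ℝ) ≤ (n:ℝ) * Hb u n + u n := by
      have := hu n; positivity
    have h2 : (0:ℝ) < ((n:ℝ)+2)^2 := by positivity
    exact div_nonneg h1 h2.le

lemma hseq_abs_le (g : ℕ → ℝ) : ∀ n, |hseq g n| ≤ Hb (fun k => |g k|) n := by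
  intro n
  induction n using Nat.twoStepInduction with
  | zero => simp [hseq, Hb]
  | one => simp [hseq, Hb]
  | more n ih _ =>
    simp only [hseq, Hb, abs_div]
    have h2 : (0:ℝ) < ((n:ℝ)+2)^2 := by positivity
    rw [abs_of_pos h2]
    gcongr
    rcases Nat.eq_zero_or_pos n with hn | hn
    · subst hn
      simp [hseq]
    · calc |((n:ℝ) - 1) * hseq g n + g n|
          ≤ |((n:ℝ) - 1)| * |hseq g n| + |g n| := by
            rw [← abs_mul]; exact abs_add_le _ _
        _ ≤ (n:ℝ) * Hb (fun k => |g k|) n + |g n| := by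
            have h1 : (1:ℝ) ≤ (n:ℝ) := by exact_mod_cast hn
            have habs : |((n:ℝ) - 1)| ≤ (n:ℝ) := by
              rw [abs_sub_le_iff]; constructor <;> linarith
            have hHb : (0:ℝ) ≤ Hb (fun k => |g k|) n :=
              Hb_nonneg _ (fun k => abs_nonneg _) n
            have := mul_le_mul habs ih (abs_nonneg _) (by linarith)
            nlinarith [abs_nonneg (hseq g n)]

lemma hseq_unique (g h' : ℕ → ℝ) (hodd : ∀ n, Odd n → h' n = 0) (h0 : h' 0 = 0)
    (hL : ∀ n, Lcoef h' n = g n) : h' = hseq g := by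
  funext n
  induction n using Nat.twoStepInduction with
  | zero => simpa [hseq] using h0
  | one => simpa [hseq] using hodd 1 ⟨0, rfl⟩
  | more n ih _ =>
    have h2 : ((n:ℝ)+2)^2 ≠ 0 := by positivity
    have := hL n
    simp only [Lcoef] at this
    have hval : h' (n+2) = (((n:ℝ) - 1) * h' n + g n) / ((n:ℝ)+2)^2 := by
      field_simp
      linarith [this]
    rw [hval, ih]
    simp [hseq]

/-- `e k m = k! / (2^{m-k} m!)`. -/
noncomputable def eaux (k m : ℕ) : ℝ := (k.factorial : ℝ) / (2^(m-k) * m.factorial)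

lemma eaux_nonneg (k m : ℕ) : 0 ≤ eaux k m := by
  unfold eaux; positivity

lemma eaux_self (m : ℕ) : eaux m m = 1 := by
  unfold eaux
  have : (m.factorial : ℝ) ≠ 0 := by positivity
  simp [Nat.sub_self, this]

lemma eaux_succ (k m : ℕ) (hk : k ≤ m) : eaux k (m+1) = eaux k m / (2*((m:ℝ)+1)) := by
  unfold eaux
  have hsub : m+1-k = (m-k)+1 := by omega
  rw [hsub, pow_succ, Nat.factorial_succ]
  have h1 : ((m.factorial : ℝ)) ≠ 0 := by positivity
  have h2 : ((2:ℝ))^(m-k) ≠ 0 := by positivity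
  push_cast
  field_simp

lemma Hb_closed (u : ℕ → ℝ) : ∀ m : ℕ,
    Hb u (2*m) * (2*(m:ℝ)) = ∑ k ∈ Finset.range m, u (2*k) * eaux k m := by
  intro m
  induction m with
  | zero => simp [Hb]
  | succ m ih =>
    have hHb : Hb u (2*(m+1)) = (((2*m:ℕ):ℝ) * Hb u (2*m) + u (2*m)) / (((2*m:ℕ):ℝ)+2)^2 := by
      have h2 : 2*(m+1) = (2*m)+2 := by ring
      rw [h2]
      rfl
    have hsum : ∑ k ∈ Finset.range m, u (2*k) * eaux k (m+1)
        = (∑ k ∈ Finset.range m, u (2*k) * eaux k m) / (2*((m:ℝ)+1)) := by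
      rw [Finset.sum_div]
      refine Finset.sum_congr rfl fun k hk => ?_
      rw [eaux_succ k m (Nat.le_of_lt (Finset.mem_range.mp hk))]
      ring
    rw [hHb, Finset.sum_range_succ, hsum, ← ih, eaux_succ m m le_rfl, eaux_self]
    have hm1 : (m:ℝ)+1 ≠ 0 := by positivity
    push_cast
    field_simp

lemma eaux_bound (s : ℝ) (hs : 0 ≤ s) (k t : ℕ) :
    eaux k (k+t+1) * (s * s^t) ≤ (s/2) / ((k:ℝ)+1) * ((s/2)^t / (t.factorial : ℝ)) := by
  have hsub : k+t+1-k = t+1 := by omega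
  have hnatd : (k+1).factorial * t.factorial ∣ (k+t+1).factorial := by
    have := Nat.factorial_mul_factorial_dvd_factorial_add (k+1) t
    rwa [show k+1+t = k+t+1 by omega] at this
  have hnat : ((k:ℝ)+1) * (k.factorial : ℝ) * (t.factorial : ℝ) ≤ ((k+t+1).factorial : ℝ) := by
    have hle := Nat.le_of_dvd (Nat.factorial_pos _) hnatd
    have : ((k+1).factorial * t.factorial : ℕ) = (k+1) * k.factorial * t.factorial := by
      rw [Nat.factorial_succ]
    rw [this] at hle
    exact_mod_cast hle
  have h1 : eaux k (k+t+1) * (s * s^t)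
      = ((k.factorial:ℝ) * (s*s^t)) / (2^(t+1) * ((k+t+1).factorial : ℝ)) := by
    rw [eaux, hsub]; ring
  have h2 : (s/2) / ((k:ℝ)+1) * ((s/2)^t / (t.factorial : ℝ))
      = (1 * (s*s^t)) / ((2:ℝ)^(t+1) * (((k:ℝ)+1) * (t.factorial : ℝ))) := by
    rw [div_pow, pow_succ]
    have hk1 : ((k:ℝ)+1) ≠ 0 := by positivity
    have htf : ((t.factorial:ℝ)) ≠ 0 := by positivity
    have h2t : ((2:ℝ))^t ≠ 0 := by positivity
    field_simp
  rw [h1, h2, div_le_div_iff₀ (by positivity) (by positivity)]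
  have hpos : (0:ℝ) ≤ s*s^t*2^(t+1) := by positivity
  nlinarith [mul_le_mul_of_nonneg_left hnat hpos]

lemma tsum_exp_bound (a : ℝ) (ha : 0 ≤ a) :
    ∑' t : ℕ, a^t / (t.factorial : ℝ) ≤ Real.exp a :=
  Summable.tsum_le_of_sum_range_le (Real.summable_pow_div_factorial a) (Real.sum_le_exp_of_nonneg ha)
lemma norm_bound (r : ℝ) (hr : 0 < r) (g : ℕ → ℝ)
    (hgodd : ∀ n, Odd n → g n = 0)
    (hgsum : Summable (fun n : ℕ => |g n| * max 1 (n : ℝ) * r ^ ((n : ℤ) - 1))) :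
    Summable (fun n : ℕ => |hseq g n| * max 1 (n : ℝ) * r ^ ((n : ℤ) - 1)) ∧
    Xnorm r (hseq g) ≤ r ^ 2 * Real.exp (r ^ 2 / 2) * Xnorm r (Gcoef g) := by
  classical
  have hrne : r ≠ 0 := ne_of_gt hr
  set u : ℕ → ℝ := fun n => |g n| with hu
  set E : ℝ := Real.exp (r ^ 2 / 2) with hE
  have hE0 : 0 < E := Real.exp_pos _
  set ρ : ℕ → ℝ := fun k => r ^ (2 * (k : ℤ) - 1) with hρ
  have hρpos : ∀ k, 0 < ρ k := fun k => zpow_pos hr _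
  have hρeq : ∀ m : ℕ, r ^ (((2 * m : ℕ) : ℤ) - 1) = ρ m := by
    intro m; rw [hρ]; push_cast; ring_nf
  have hρadd : ∀ k t : ℕ, ρ (k + t + 1) = ρ k * (r ^ 2 * (r ^ 2) ^ t) := by
    intro k t
    have h1 : 2 * ((k + t + 1 : ℕ) : ℤ) - 1 = (2 * (k : ℤ) - 1) + ((2 * t + 2 : ℕ) : ℤ) := by
      push_cast; ring
    rw [hρ]
    simp only
    rw [h1, zpow_add₀ hrne, zpow_natCast]
    congr 1
    rw [pow_add, pow_mul]
    ring
  set T : ℕ → ℝ := fun n => |hseq g n| * max 1 (n : ℝ) * r ^ ((n : ℤ) - 1) with hT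
  have hT0 : ∀ n, 0 ≤ T n := by
    intro n
    have : (0:ℝ) < r ^ ((n : ℤ) - 1) := zpow_pos hr _
    simp only [hT]
    positivity
  have hTodd : ∀ n, Odd n → T n = 0 := by
    intro n hn
    simp only [hT]
    simp [hseq_odd g hgodd n hn]
  set GT : ℕ → ℝ := fun n => |Gcoef g n| * max 1 (n : ℝ) * r ^ ((n : ℤ) - 1) with hGT
  have hGT0 : ∀ n, 0 ≤ GT n := by
    intro n
    have : (0:ℝ) < r ^ ((n : ℤ) - 1) := zpow_pos hr _
    simp only [hGT]
    positivity
  have hGTsum : Summable GT := by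
    apply hgsum.of_nonneg_of_le hGT0
    intro n
    simp only [hGT]
    have hzp : (0:ℝ) ≤ r ^ ((n : ℤ) - 1) := (zpow_pos hr _).le
    have hmax : (0:ℝ) ≤ max 1 (n : ℝ) := le_trans zero_le_one (le_max_left _ _)
    have habs : |Gcoef g n| ≤ |g n| := by
      have hden : (1:ℝ) ≤ ((n : ℝ) + 2) * max 1 (n : ℝ) := by
        have h1 : (1:ℝ) ≤ (n : ℝ) + 2 := by
          have := Nat.cast_nonneg (α := ℝ) n; linarith
        have h2 : (1:ℝ) ≤ max 1 (n : ℝ) := le_max_left _ _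
        nlinarith
      rw [show Gcoef g n = g n / (((n : ℝ) + 2) * max 1 (n : ℝ)) from rfl, abs_div, abs_of_pos (by linarith : (0:ℝ) < ((n : ℝ) + 2) * max 1 (n : ℝ))]
      exact div_le_self (abs_nonneg _) hden
    gcongr
  have hGTeq : ∀ k : ℕ, GT (2 * k) = u (2 * k) * ρ k / (2 * ((k : ℝ) + 1)) := by
    intro k
    have hmaxpos : (0:ℝ) < max 1 ((2 * k : ℕ) : ℝ) := lt_of_lt_of_le one_pos (le_max_left _ _)
    have hden : (0:ℝ) < (((2 * k : ℕ) : ℝ) + 2) * max 1 ((2 * k : ℕ) : ℝ) := by positivity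
    simp only [hGT, Gcoef]
    rw [abs_div, abs_of_pos hden, hρeq, hu]
    have h2k : ((2 * k : ℕ) : ℝ) + 2 = 2 * ((k : ℝ) + 1) := by push_cast; ring
    rw [h2k]
    field_simp
  -- the double family
  set v : ℕ → ℕ → ENNReal := fun k m => ENNReal.ofReal (u (2 * k) * eaux k m * ρ m) with hv
  set W : ℕ → ℕ → ENNReal := fun k m => if k < m then v k m else 0 with hW
  have step2 : ∀ m, ENNReal.ofReal (T (2 * m)) ≤ ∑ k ∈ Finset.range m, v k m := by
    intro m
    have hTle : T (2 * m) ≤ (∑ k ∈ Finset.range m, u (2 * k) * eaux k m) * ρ m := by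
      rcases m with _ | m
      · simp only [hT]; simp [hseq]
      · have hmax : max 1 ((2 * (m + 1) : ℕ) : ℝ) = (((2 * (m + 1):ℕ)) : ℝ) := by
          rw [max_eq_right]
          push_cast; linarith [Nat.cast_nonneg (α := ℝ) m]
        simp only [hT]
        rw [hmax, hρeq, ← Hb_closed (fun n => |g n|)]
        have hb := hseq_abs_le g (2 * (m + 1))
        have h1 : (0:ℝ) < ρ (m + 1) := hρpos _
        have hcast : (((2 * (m + 1):ℕ)) : ℝ) = 2 * (((m + 1):ℕ) : ℝ) := by push_cast; ring
        rw [hcast]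
        have hnn : (0:ℝ) ≤ 2 * (((m + 1):ℕ) : ℝ) := by positivity
        exact mul_le_mul_of_nonneg_right (mul_le_mul_of_nonneg_right hb hnn) h1.le
    calc ENNReal.ofReal (T (2 * m))
        ≤ ENNReal.ofReal ((∑ k ∈ Finset.range m, u (2 * k) * eaux k m) * ρ m) :=
          ENNReal.ofReal_le_ofReal hTle
      _ = ∑ k ∈ Finset.range m, ENNReal.ofReal (u (2 * k) * eaux k m * ρ m) := by
          rw [Finset.sum_mul]
          rw [ENNReal.ofReal_sum_of_nonneg]
          intro k hk
          have := eaux_nonneg k m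
          have := hρpos m
          simp only [hu]
          positivity
      _ = ∑ k ∈ Finset.range m, v k m := rfl
  have hWsum : ∀ m, ∑ k ∈ Finset.range m, v k m = ∑' k : ℕ, W k m := by
    intro m
    rw [tsum_eq_sum (s := Finset.range m) (f := fun k => W k m)
      (by intro k hk; simp only [hW]; rw [if_neg]; simpa using hk)]
    refine Finset.sum_congr rfl fun k hk => ?_
    simp only [hW]
    rw [if_pos (Finset.mem_range.mp hk)]
  have hinner : ∀ k, ∑' m : ℕ, W k m = ∑' t : ℕ, v k (k + t + 1) := by
    intro k
    have hinj : Function.Injective (fun t : ℕ => k + t + 1) := fun a b hab => by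
      simpa using hab
    have hsupp : Function.support (fun m => W k m) ⊆ Set.range (fun t : ℕ => k + t + 1) := by
      intro m hm
      simp only [Function.mem_support, hW] at hm
      by_cases hkm : k < m
      · exact ⟨m - k - 1, by show k + (m - k - 1) + 1 = m; omega⟩
      · exact absurd (if_neg hkm) hm
    rw [← Function.Injective.tsum_eq hinj hsupp]
    refine tsum_congr fun t => ?_
    simp only [hW]
    rw [if_pos (by omega)]
  have step4 : ∀ k, ∑' t : ℕ, v k (k + t + 1) ≤ ENNReal.ofReal (r ^ 2 * E * GT (2 * k)) := by
    intro k
    set C : ℝ := u (2 * k) * ρ k * ((r ^ 2 / 2) / ((k : ℝ) + 1)) with hC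
    have hC0 : 0 ≤ C := by
      have := (hρpos k).le
      have : (0:ℝ) ≤ u (2 * k) := abs_nonneg _
      rw [hC]
      positivity
    have hterm : ∀ t : ℕ, v k (k + t + 1)
        ≤ ENNReal.ofReal (C * ((r ^ 2 / 2) ^ t / (t.factorial : ℝ))) := by
      intro t
      simp only [hv]
      apply ENNReal.ofReal_le_ofReal
      rw [hρadd k t]
      have eb := eaux_bound (r ^ 2) (sq_nonneg r) k t
      have huρ : (0:ℝ) ≤ u (2 * k) * ρ k := mul_nonneg (abs_nonneg _) (hρpos k).le
      calc u (2 * k) * eaux k (k + t + 1) * (ρ k * (r ^ 2 * (r ^ 2) ^ t))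
          = (u (2 * k) * ρ k) * (eaux k (k + t + 1) * (r ^ 2 * (r ^ 2) ^ t)) := by ring
        _ ≤ (u (2 * k) * ρ k) * ((r ^ 2 / 2) / ((k : ℝ) + 1) * ((r ^ 2 / 2) ^ t / (t.factorial : ℝ))) :=
            mul_le_mul_of_nonneg_left eb huρ
        _ = C * ((r ^ 2 / 2) ^ t / (t.factorial : ℝ)) := by rw [hC]; ring
    calc ∑' t : ℕ, v k (k + t + 1)
        ≤ ∑' t : ℕ, ENNReal.ofReal (C * ((r ^ 2 / 2) ^ t / (t.factorial : ℝ))) :=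
          ENNReal.tsum_le_tsum hterm
      _ = ENNReal.ofReal C * ∑' t : ℕ, ENNReal.ofReal ((r ^ 2 / 2) ^ t / (t.factorial : ℝ)) := by
          rw [← ENNReal.tsum_mul_left]
          exact tsum_congr fun t => ENNReal.ofReal_mul hC0
      _ ≤ ENNReal.ofReal C * ENNReal.ofReal E := by
          apply mul_le_mul_right
          rw [← ENNReal.ofReal_tsum_of_nonneg (fun t => by positivity)
            (Real.summable_pow_div_factorial _)]
          exact ENNReal.ofReal_le_ofReal (tsum_exp_bound _ (by positivity))
      _ = ENNReal.ofReal (C * E) := (ENNReal.ofReal_mul hC0).symm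
      _ = ENNReal.ofReal (r ^ 2 * E * GT (2 * k)) := by
          congr 1
          rw [hGTeq k, hC]
          field_simp
  have main : ∑' n : ℕ, ENNReal.ofReal (T n) ≤ ENNReal.ofReal (r ^ 2 * E * Xnorm r (Gcoef g)) := by
    have hreindex : ∑' n : ℕ, ENNReal.ofReal (T n) = ∑' m : ℕ, ENNReal.ofReal (T (2 * m)) := by
      symm
      refine Function.Injective.tsum_eq (g := fun m : ℕ => 2 * m)
        (mul_right_injective₀ two_ne_zero) (f := fun n => ENNReal.ofReal (T n)) ?_
      intro n hn
      simp only [Function.mem_support] at hn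
      rcases Nat.even_or_odd n with he | ho
      · obtain ⟨j, hj⟩ := he
        exact ⟨j, by show 2 * j = n; omega⟩
      · exact absurd (by rw [hTodd n ho]; simp) hn
    have hre2 : r ^ 2 * E * Xnorm r (Gcoef g) = r ^ 2 * E * ∑' n : ℕ, GT n := by
      rw [hGT, Xnorm]
    rw [hreindex, hre2]
    calc ∑' m : ℕ, ENNReal.ofReal (T (2 * m))
        ≤ ∑' m : ℕ, ∑' k : ℕ, W k m :=
          ENNReal.tsum_le_tsum fun m => le_of_le_of_eq (step2 m) (hWsum m)
      _ = ∑' k : ℕ, ∑' m : ℕ, W k m := ENNReal.tsum_comm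
      _ = ∑' k : ℕ, ∑' t : ℕ, v k (k + t + 1) := tsum_congr hinner
      _ ≤ ∑' k : ℕ, ENNReal.ofReal (r ^ 2 * E * GT (2 * k)) := ENNReal.tsum_le_tsum step4
      _ = ENNReal.ofReal (r ^ 2 * E) * ∑' k : ℕ, ENNReal.ofReal (GT (2 * k)) := by
          rw [← ENNReal.tsum_mul_left]
          exact tsum_congr fun k => ENNReal.ofReal_mul (by positivity)
      _ ≤ ENNReal.ofReal (r ^ 2 * E) * ∑' n : ℕ, ENNReal.ofReal (GT n) :=
          mul_le_mul_right
            (ENNReal.tsum_comp_le_tsum_of_injective (f := fun m : ℕ => 2 * m)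
              (mul_right_injective₀ two_ne_zero) _) _
      _ = ENNReal.ofReal (r ^ 2 * E) * ENNReal.ofReal (∑' n : ℕ, GT n) := by
          rw [ENNReal.ofReal_tsum_of_nonneg hGT0 hGTsum]
      _ = ENNReal.ofReal (r ^ 2 * E * ∑' n : ℕ, GT n) :=
          (ENNReal.ofReal_mul (by positivity)).symm
  have hne : ∑' n : ℕ, ENNReal.ofReal (T n) ≠ ⊤ :=
    (lt_of_le_of_lt main ENNReal.ofReal_lt_top).ne
  have hsumT : Summable T := by
    have h1 := ENNReal.summable_toReal hne
    refine (summable_congr fun n => ?_).mp h1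
    exact ENNReal.toReal_ofReal (hT0 n)
  have hXGnn : 0 ≤ Xnorm r (Gcoef g) := by
    rw [show Xnorm r (Gcoef g) = ∑' n : ℕ, GT n from by rw [hGT, Xnorm]]
    exact tsum_nonneg hGT0
  refine ⟨hsumT, ?_⟩
  rw [← ENNReal.ofReal_le_ofReal_iff (by positivity)]
  calc ENNReal.ofReal (Xnorm r (hseq g))
      = ∑' n : ℕ, ENNReal.ofReal (T n) := by
        rw [show Xnorm r (hseq g) = ∑' n : ℕ, T n from by rw [hT, Xnorm]]
        exact ENNReal.ofReal_tsum_of_nonneg hT0 hsumT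
    _ ≤ ENNReal.ofReal (r ^ 2 * E * Xnorm r (Gcoef g)) := main

/-- For every `r > 0` and `g ∈ X_r` there is a unique `h ∈ X_r⁰` with `L h = g`;
moreover `‖L⁻¹ g‖_r = ‖h‖_r ≤ r² e^{r²/2} ‖G g‖_r`. -/
theorem L_inverse_analytic (r : ℝ) (hr : 0 < r) (g : ℕ → ℝ) (hg : MemX r g) :
    ∃ h : ℕ → ℝ,
      (MemX r h ∧ h 0 = 0 ∧ ∀ n, Lcoef h n = g n) ∧
      (∀ h' : ℕ → ℝ, (MemX r h' ∧ h' 0 = 0 ∧ ∀ n, Lcoef h' n = g n) → h' = h) ∧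
      Xnorm r h ≤ r ^ 2 * Real.exp (r ^ 2 / 2) * Xnorm r (Gcoef g) := by
  obtain ⟨hgodd, hgsum⟩ := hg
  obtain ⟨hsum, hbound⟩ := norm_bound r hr g hgodd hgsum
  refine ⟨hseq g, ⟨⟨hseq_odd g hgodd, hsum⟩, rfl, hseq_L g⟩, ?_, hbound⟩
  rintro h' ⟨⟨hodd', -⟩, h0', hL'⟩
  exact hseq_unique g h' hodd' h0' hL'
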